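/- Let G be a connected affine algebraic group over an algebraically closed field k acting rationally by k-algebra automorphisms on a k-algebra R. Then for every prime ideal P of R, the ideal (P:G) = ⋂_{g∈G} g·P is a prime ideal of R. Consequently, the G-prime ideals of R are exactly the G-stable prime ideals. -/

import Mathlib

open TensorProduct

/-- A two-sided ideal `P` of a ring `R` is prime if `P ≠ R` and `AB ⊆ P` implies
`A ⊆ P` or `B ⊆ P`. -/
def IsPrimeTwoSided {R : Type*} [Ring R] (P : TwoSidedIdeal R) : Prop :=
  P ≠ ⊤ ∧ ∀ A B : TwoSidedIdeal R, (∀ a ∈ A, ∀ b ∈ B, a * b ∈ P) → A ≤ P ∨ B ≤ P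

/-- An ideal is `G`-stable if it is preserved by the action of every `g ∈ G`. -/
def IsGStable (G : Type*) {R : Type*} [Group G] [Ring R] [MulSemiringAction G R]
    (I : TwoSidedIdeal R) : Prop :=
  ∀ g : G, ∀ x ∈ I, g • x ∈ I

/-- A proper `G`-stable ideal `I` is `G`-prime if `AB ⊆ I` for `G`-stable ideals
`A`, `B` implies `A ⊆ I` or `B ⊆ I`. -/
def IsGPrime (G : Type*) {R : Type*} [Group G] [Ring R] [MulSemiringAction G R]
    (I : TwoSidedIdeal R) : Prop :=
  I ≠ ⊤ ∧ IsGStable G I ∧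
    ∀ A B : TwoSidedIdeal R, IsGStable G A → IsGStable G B →
      (∀ a ∈ A, ∀ b ∈ B, a * b ∈ I) → A ≤ I ∨ B ≤ I

namespace CorePrimeAux

/-! ### A pointwise Nullstellensatz -/

theorem exists_point {k : Type*} [Field k] [IsAlgClosed k]
    {A : Type*} [CommRing A] [IsDomain A] [Algebra k A] [Algebra.FiniteType k A]
    {a : A} (ha : a ≠ 0) : ∃ φ : A →ₐ[k] k, φ a ≠ 0 := by
  haveI : IsJacobsonRing A := isJacobsonRing_of_finiteType (A := k)
  have hj : (⊥ : Ideal A).jacobson = ⊥ := by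
    rw [← Ideal.radical_eq_jacobson]
    simpa using (nilradical_eq_zero A)
  have ham : ∃ m : Ideal A, m.IsMaximal ∧ a ∉ m := by
    by_contra h
    push_neg at h
    have : a ∈ (⊥ : Ideal A).jacobson := Ideal.mem_sInf.mpr fun {J} hJ => h J hJ.2
    rw [hj] at this
    exact ha this
  obtain ⟨m, hm, ham⟩ := ham
  letI : Field (A ⧸ m) := Ideal.Quotient.field m
  haveI : Algebra.FiniteType k (A ⧸ m) :=
    Algebra.FiniteType.of_surjective (Ideal.Quotient.mkₐ k m)
      (Ideal.Quotient.mkₐ_surjective k m)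
  haveI : Module.Finite k (A ⧸ m) := finite_of_finite_type_of_isJacobsonRing k (A ⧸ m)
  haveI : Algebra.IsIntegral k (A ⧸ m) := Algebra.IsIntegral.of_finite k (A ⧸ m)
  have hsurj : Function.Surjective (algebraMap k (A ⧸ m)) :=
    IsAlgClosed.algebraMap_bijective_of_isIntegral.2
  have hinj : Function.Injective (algebraMap k (A ⧸ m)) :=
    (algebraMap k (A ⧸ m)).injective
  let e : k ≃ₐ[k] (A ⧸ m) := AlgEquiv.ofBijective (Algebra.ofId k (A ⧸ m)) ⟨hinj, hsurj⟩
  refine ⟨(e.symm : (A ⧸ m) →ₐ[k] k).comp (Ideal.Quotient.mkₐ k m), fun h => ham ?_⟩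
  have : Ideal.Quotient.mkₐ k m a = 0 := by
    have := congrArg e h
    simpa using this
  exact (Ideal.Quotient.eq_zero_iff_mem).mp this

/-! ### Coefficients of tensors -/

variable {k : Type*} [Field k] {A : Type*} [CommRing A] [Algebra k A]
  {M : Type*} [AddCommGroup M] [Module k M]

/-- coefficients of a tensor w.r.t. a basis of `M`, as a linear map -/
noncomputable def tcoeff {ι : Type*} [DecidableEq ι] (b : Module.Basis ι k M) :
    M ⊗[k] A →ₗ[k] (ι →₀ A) :=
  (TensorProduct.finsuppScalarLeft k A ι).toLinearMap.comp
    (TensorProduct.map b.repr.toLinearMap LinearMap.id)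

theorem repr_ev (φ : A →ₗ[k] k) {ι : Type*} [DecidableEq ι] (b : Module.Basis ι k M)
    (t : M ⊗[k] A) (i : ι) :
    b.repr ((TensorProduct.rid k M) (TensorProduct.map LinearMap.id φ t)) i
      = φ (tcoeff b t i) := by
  induction t using TensorProduct.induction_on with
  | zero => simp
  | tmul m a =>
      simp [tcoeff, TensorProduct.finsuppScalarLeft_apply_tmul_apply, map_smul,
        smul_eq_mul, mul_comm]
  | add x y hx hy =>
      simp only [map_add, Finsupp.add_apply] at hx hy ⊢
      rw [hx, hy]

theorem ev_eq_zero_iff (φ : A →ₗ[k] k) {ι : Type*} [DecidableEq ι] (b : Module.Basis ι k M)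
    (t : M ⊗[k] A) :
    (TensorProduct.rid k M) (TensorProduct.map LinearMap.id φ t) = 0 ↔
      ∀ i, φ (tcoeff b t i) = 0 := by
  rw [← b.repr.map_eq_zero_iff, Finsupp.ext_iff]
  simp_rw [repr_ev φ b t, Finsupp.zero_apply]

theorem quot_ev {N : Type*} [AddCommGroup N] [Module k N]
    (q : M →ₗ[k] N) (φ : A →ₗ[k] k) (x : M ⊗[k] A) :
    q ((TensorProduct.rid k M) (TensorProduct.map LinearMap.id φ x)) =
      (TensorProduct.rid k N) (TensorProduct.map LinearMap.id φ
        (TensorProduct.map q LinearMap.id x)) := by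
  induction x using TensorProduct.induction_on with
  | zero => simp
  | tmul r a => simp
  | add x y hx hy => simp [map_add, hx, hy]

/-! ### Two-sided ideal helpers -/

/-- a two-sided ideal as a `k`-submodule -/
def tsub (k : Type*) [Field k] {R : Type*} [Ring R] [Algebra k R]
    (P : TwoSidedIdeal R) : Submodule k R where
  carrier := P
  add_mem' := fun h1 h2 => P.add_mem h1 h2
  zero_mem' := P.zero_mem
  smul_mem' := fun c x hx => by
    rw [Algebra.smul_def]; exact P.mul_mem_left _ _ hx

theorem mem_tsub {k : Type*} [Field k] {R : Type*} [Ring R] [Algebra k R]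
    {P : TwoSidedIdeal R} {x : R} : x ∈ tsub k P ↔ x ∈ P := Iff.rfl

theorem eq_top_of_one_mem {R : Type*} [Ring R] {P : TwoSidedIdeal R} (h : (1:R) ∈ P) :
    P = ⊤ :=
  SetLike.ext fun x => ⟨fun _ => trivial, fun _ => by simpa using P.mul_mem_left x 1 h⟩

variable {G : Type*} [Group G]

section gcore
variable {R : Type*} [Ring R] [MulSemiringAction G R]

/-- the `G`-core of a two-sided ideal -/
def gcore (G : Type*) [Group G] {R : Type*} [Ring R] [MulSemiringAction G R]
    (J : TwoSidedIdeal R) : TwoSidedIdeal R :=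
  TwoSidedIdeal.mk' {x | ∀ g : G, g • x ∈ J}
    (fun g => by rw [smul_zero]; exact J.zero_mem)
    (fun {x y} hx hy g => by rw [smul_add]; exact J.add_mem (hx g) (hy g))
    (fun {x} hx g => by rw [smul_neg]; exact J.neg_mem (hx g))
    (fun {x y} hy g => by rw [smul_mul']; exact J.mul_mem_left _ _ (hy g))
    (fun {x y} hx g => by rw [smul_mul']; exact J.mul_mem_right _ _ (hx g))

theorem mem_gcore {J : TwoSidedIdeal R} {x : R} :
    x ∈ gcore G J ↔ ∀ g : G, g • x ∈ J :=
  TwoSidedIdeal.mem_mk' _ _ _ _ _ _ _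

theorem gcore_stable (J : TwoSidedIdeal R) : IsGStable G (gcore G J) := by
  intro g x hx
  rw [mem_gcore] at hx ⊢
  intro h
  rw [← mul_smul]
  exact hx (h * g)

/-- union of a chain of two-sided ideals -/
theorem chain_ub (c : Set (TwoSidedIdeal R)) (hchain : IsChain (· ≤ ·) c)
    (P₀ : TwoSidedIdeal R) (hP₀ : P₀ ∈ c) :
    ∃ U : TwoSidedIdeal R, (∀ J ∈ c, J ≤ U) ∧ ∀ x : R, x ∈ U → ∃ J ∈ c, x ∈ J := by
  refine ⟨TwoSidedIdeal.mk' (⋃ J ∈ c, (J : Set R))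
    (Set.mem_iUnion₂.2 ⟨P₀, hP₀, P₀.zero_mem⟩)
    (fun {x y} hx hy => ?_)
    (fun {x} hx => ?_)
    (fun {x y} hy => ?_)
    (fun {x y} hx => ?_), fun J hJ z hz => ?_, fun x hx => ?_⟩
  · obtain ⟨J₁, h₁, hx⟩ := Set.mem_iUnion₂.1 hx
    obtain ⟨J₂, h₂, hy⟩ := Set.mem_iUnion₂.1 hy
    rcases hchain.total h₁ h₂ with h | h
    · exact Set.mem_iUnion₂.2 ⟨J₂, h₂, J₂.add_mem (h hx) hy⟩
    · exact Set.mem_iUnion₂.2 ⟨J₁, h₁, J₁.add_mem hx (h hy)⟩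
  · obtain ⟨J, hJ, hx⟩ := Set.mem_iUnion₂.1 hx
    exact Set.mem_iUnion₂.2 ⟨J, hJ, J.neg_mem hx⟩
  · obtain ⟨J, hJ, hy⟩ := Set.mem_iUnion₂.1 hy
    exact Set.mem_iUnion₂.2 ⟨J, hJ, J.mul_mem_left _ _ hy⟩
  · obtain ⟨J, hJ, hx⟩ := Set.mem_iUnion₂.1 hx
    exact Set.mem_iUnion₂.2 ⟨J, hJ, J.mul_mem_right _ _ hx⟩
  · rw [TwoSidedIdeal.mem_mk']
    exact Set.mem_iUnion₂.2 ⟨J, hJ, hz⟩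
  · rw [TwoSidedIdeal.mem_mk'] at hx
    obtain ⟨J, hJ, h⟩ := Set.mem_iUnion₂.1 hx
    exact ⟨J, hJ, h⟩

end gcore

/-! ### Part 1: the core of a prime is prime -/

theorem part1
    {k : Type*} [Field k] [IsAlgClosed k]
    {A : Type*} [CommRing A] [IsDomain A] [Algebra k A] [Algebra.FiniteType k A]
    (pt : G ≃ (A →ₐ[k] k))
    {R : Type*} [Ring R] [Algebra k R] [MulSemiringAction G R]
    (ρ : R →ₐ[k] R ⊗[k] A)
    (haction : ∀ (g : G) (r : R), g • r =
      (TensorProduct.rid k R)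
        (TensorProduct.map LinearMap.id (pt g).toLinearMap (ρ r)))
    (P Q : TwoSidedIdeal R) (hP : IsPrimeTwoSided P)
    (hQ : ∀ x : R, x ∈ Q ↔ ∀ g : G, g • x ∈ P) : IsPrimeTwoSided Q := by
  constructor
  · intro h
    have h1Q : (1:R) ∈ Q := by rw [h]; trivial
    have h1 : (1:R) ∈ P := by simpa using (hQ 1).1 h1Q 1
    exact hP.1 (eq_top_of_one_mem h1)
  · intro A' B' hAB
    by_contra hcon
    push_neg at hcon
    obtain ⟨hA, hB⟩ := hcon
    obtain ⟨a, haA, haQ⟩ := SetLike.not_le_iff_exists.1 hA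
    obtain ⟨b, hbB, hbQ⟩ := SetLike.not_le_iff_exists.1 hB
    rw [hQ] at haQ hbQ
    push_neg at haQ hbQ
    obtain ⟨g₀, hg₀⟩ := haQ
    obtain ⟨g₁, hg₁⟩ := hbQ
    -- for every g, `g•a ∈ P` or `g•b ∈ P`
    have hcover : ∀ g : G, g • a ∈ P ∨ g • b ∈ P := by
      intro g
      by_contra hc
      push_neg at hc
      have key : ∀ r : R, (g • a) * r * (g • b) ∈ P := by
        intro r
        have h1 : a * (g⁻¹ • r) * b ∈ Q := hAB _ (A'.mul_mem_right _ _ haA) _ hbB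
        have h2 := (hQ _).1 h1 g
        rwa [smul_mul', smul_mul', smul_inv_smul] at h2
      set B₀ := TwoSidedIdeal.span {g • b} with hB₀
      have hBmem : ∀ w ∈ B₀, (g • a) * w ∈ P := by
        intro w hw
        rw [hB₀, TwoSidedIdeal.mem_span_iff_mem_addSubgroup_closure] at hw
        induction hw using AddSubgroup.closure_induction with
        | mem x hx =>
            obtain ⟨y, ⟨r, -, z, hz, rfl⟩, s, -, rfl⟩ := hx
            rw [Set.mem_singleton_iff] at hz
            subst hz
            simpa only [mul_assoc] using P.mul_mem_right _ s (key r)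
        | zero => rw [mul_zero]; exact P.zero_mem
        | add x y _ _ hx hy => rw [mul_add]; exact P.add_mem hx hy
        | neg x _ hx => rw [mul_neg]; exact P.neg_mem hx
      set A₀ : TwoSidedIdeal R := TwoSidedIdeal.mk' {z | ∀ w ∈ B₀, z * w ∈ P}
        (fun w _ => by rw [zero_mul]; exact P.zero_mem)
        (fun {x y} hx hy w hw => by rw [add_mul]; exact P.add_mem (hx w hw) (hy w hw))
        (fun {x} hx w hw => by rw [neg_mul]; exact P.neg_mem (hx w hw))
        (fun {x y} hy w hw => by rw [mul_assoc]; exact P.mul_mem_left _ _ (hy w hw))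
        (fun {x y} hx w hw => by
          rw [mul_assoc]; exact hx _ (B₀.mul_mem_left _ _ hw)) with hA₀
      have hprod : ∀ x ∈ A₀, ∀ y ∈ B₀, x * y ∈ P := by
        intro x hx y hy
        rw [hA₀, TwoSidedIdeal.mem_mk'] at hx
        exact hx y hy
      rcases hP.2 A₀ B₀ hprod with h | h
      · refine hc.1 (h ?_)
        rw [hA₀, TwoSidedIdeal.mem_mk']
        exact hBmem
      · exact hc.2 (h (TwoSidedIdeal.mem_span_iff.2 fun I hI => hI rfl))
    -- now the geometry
    classical
    set pP : Submodule k R := tsub k P with hpP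
    haveI : DecidableEq ↑(Module.Basis.ofVectorSpaceIndex k (R ⧸ pP)) := Classical.decEq _
    set q : R →ₗ[k] (R ⧸ pP) := pP.mkQ with hq
    set b0 : Module.Basis _ k (R ⧸ pP) := Module.Basis.ofVectorSpace k (R ⧸ pP) with hb0
    have hmemP : ∀ (x : R) (g : G), g • x ∈ P ↔
        ∀ i, (pt g) (tcoeff b0 (TensorProduct.map q LinearMap.id (ρ x)) i) = 0 := by
      intro x g
      have h0 : g • x ∈ P ↔ q (g • x) = 0 := by
        rw [hq, Submodule.mkQ_apply, Submodule.Quotient.mk_eq_zero]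
        exact Iff.rfl
      rw [h0, haction, quot_ev q (pt g).toLinearMap (ρ x), ev_eq_zero_iff ((pt g).toLinearMap) (b := b0)]
      simp only [AlgHom.toLinearMap_apply]
    obtain ⟨i₀, hi₀⟩ : ∃ i, (pt g₀) (tcoeff b0 (TensorProduct.map q LinearMap.id (ρ a)) i) ≠ 0 := by
      by_contra h
      push_neg at h
      exact hg₀ ((hmemP a g₀).2 h)
    obtain ⟨i₁, hi₁⟩ : ∃ i, (pt g₁) (tcoeff b0 (TensorProduct.map q LinearMap.id (ρ b)) i) ≠ 0 := by
      by_contra h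
      push_neg at h
      exact hg₁ ((hmemP b g₁).2 h)
    set c := tcoeff b0 (TensorProduct.map q LinearMap.id (ρ a)) i₀ with hc
    set d := tcoeff b0 (TensorProduct.map q LinearMap.id (ρ b)) i₁ with hd
    have hc0 : c ≠ 0 := fun h => hi₀ (by rw [h, map_zero])
    have hd0 : d ≠ 0 := fun h => hi₁ (by rw [h, map_zero])
    obtain ⟨φ, hφ⟩ := exists_point (k := k) (mul_ne_zero hc0 hd0)
    rcases hcover (pt.symm φ) with h | h
    · have h' := (hmemP a (pt.symm φ)).1 h i₀
      rw [Equiv.apply_symm_apply, ← hc] at h'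
      exact hφ (by rw [map_mul, h', zero_mul])
    · have h' := (hmemP b (pt.symm φ)).1 h i₁
      rw [Equiv.apply_symm_apply, ← hd] at h'
      exact hφ (by rw [map_mul, h', mul_zero])

end CorePrimeAux

open CorePrimeAux in
theorem core_is_prime_of_connected
    {k : Type*} [Field k] [IsAlgClosed k]
    {A : Type*} [CommRing A] [IsDomain A] [HopfAlgebra k A] [Algebra.FiniteType k A]
    {G : Type*} [Group G] (pt : G ≃ (A →ₐ[k] k))
    (hpt : ∀ (g h : G) (a : A), pt (g * h) a =
      LinearMap.mul' k k
        (TensorProduct.map (pt g).toLinearMap (pt h).toLinearMap (Coalgebra.comul a)))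
    {R : Type*} [Ring R] [Algebra k R] [MulSemiringAction G R]
    (ρ : R →ₐ[k] R ⊗[k] A)
    (hcounit : ∀ r : R, (TensorProduct.rid k R)
      (TensorProduct.map LinearMap.id (Bialgebra.counitAlgHom k A).toLinearMap (ρ r))
        = r)
    (haction : ∀ (g : G) (r : R), g • r =
      (TensorProduct.rid k R)
        (TensorProduct.map LinearMap.id (pt g).toLinearMap (ρ r))) :
    (∀ P Q : TwoSidedIdeal R, IsPrimeTwoSided P →
        (∀ x : R, x ∈ Q ↔ ∀ g : G, g • x ∈ P) → IsPrimeTwoSided Q) ∧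
      ∀ I : TwoSidedIdeal R, IsGPrime G I ↔ (IsPrimeTwoSided I ∧ IsGStable G I) := by
  refine ⟨fun P Q hP hQ => part1 pt ρ haction P Q hP hQ, fun I => ⟨fun hI => ?_, ?_⟩⟩
  swap
  · rintro ⟨hp, hs⟩
    exact ⟨hp.1, hs, fun A' B' _ _ h => hp.2 A' B' h⟩
  refine ⟨?_, hI.2.1⟩
  -- Zorn's lemma to find a prime `P` with core `I`
  set S : Set (TwoSidedIdeal R) := {P | I ≤ P ∧ ∀ x : R, (∀ g : G, g • x ∈ P) → x ∈ I}
    with hSdef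
  have hIS : I ∈ S := ⟨le_rfl, fun x hx => by simpa using hx 1⟩
  have hchainub : ∀ c ⊆ S, IsChain (· ≤ ·) c → ∀ y ∈ c, ∃ ub ∈ S, ∀ z ∈ c, z ≤ ub := by
    intro c hcS hchain P₀ hP₀
    obtain ⟨U, hub, hUsub⟩ := chain_ub c hchain P₀ hP₀
    refine ⟨U, ⟨(hcS hP₀).1.trans (hub P₀ hP₀), ?_⟩, hub⟩
    intro x hx
    -- rationality: the orbit of x lies in a finite-dimensional subspace
    obtain ⟨s, hs⟩ := TensorProduct.exists_finset (ρ x)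
    classical
    set V : Submodule k R := Submodule.span k ((s.image Prod.fst : Finset R) : Set R) with hV
    have horb : ∀ g : G, g • x ∈ V := by
      intro g
      rw [haction, hs, map_sum, map_sum]
      refine Submodule.sum_mem _ fun p hp => ?_
      have : (TensorProduct.rid k R)
          (TensorProduct.map LinearMap.id (pt g).toLinearMap (p.1 ⊗ₜ[k] p.2))
          = (pt g) p.2 • p.1 := by
        simp
      rw [this]
      exact V.smul_mem _ (Submodule.subset_span (by
        simpa using Finset.mem_image_of_mem Prod.fst hp))
    haveI : FiniteDimensional k V := FiniteDimensional.span_of_finite k (Finset.finite_toSet _)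
    haveI hNoeth : IsNoetherian k V := IsNoetherian.iff_fg.mpr ‹_›
    set T : Set (Submodule k V) :=
      {W | ∃ J ∈ c, W = Submodule.comap V.subtype (tsub k J)} with hT
    obtain ⟨W, hWT, hWmax⟩ := (set_has_maximal_iff_noetherian.mpr hNoeth) T
      ⟨_, ⟨P₀, hP₀, rfl⟩⟩
    obtain ⟨J₀, hJ₀c, rfl⟩ := hWT
    have hall : ∀ g : G, g • x ∈ J₀ := by
      intro g
      obtain ⟨J', hJ', hgx⟩ := hUsub _ (hx g)
      rcases hchain.total hJ' hJ₀c with h | h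
      · exact h hgx
      · have hle : Submodule.comap V.subtype (tsub k J₀) ≤
            Submodule.comap V.subtype (tsub k J') :=
          Submodule.comap_mono (fun y hy => h hy)
        have heq : Submodule.comap V.subtype (tsub k J₀) =
            Submodule.comap V.subtype (tsub k J') := by
          by_contra hne
          exact hWmax _ ⟨J', hJ', rfl⟩ (lt_of_le_of_ne hle hne)
        have hmem : (⟨g • x, horb g⟩ : V) ∈ Submodule.comap V.subtype (tsub k J') := by
          rw [Submodule.mem_comap]
          exact hgx
        rw [← heq, Submodule.mem_comap] at hmem
        exact hmem
    exact (hcS hJ₀c).2 x hall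
  obtain ⟨P, hIP, hPmax⟩ := zorn_le_nonempty₀ S hchainub I hIS
  -- P is prime
  have hPS : P ∈ S := hPmax.1
  have hPtop : P ≠ ⊤ := by
    intro h
    have h1 : (1:R) ∈ I := hPS.2 1 (fun g => by rw [h]; trivial)
    exact hI.1 (eq_top_of_one_mem h1)
  have hPprime : IsPrimeTwoSided P := by
    refine ⟨hPtop, ?_⟩
    intro A' B' hAB
    by_contra hcon
    push_neg at hcon
    obtain ⟨hA, hB⟩ := hcon
    have hnotS : ∀ C : TwoSidedIdeal R, ¬ C ≤ P → ¬ gcore G (P ⊔ C) ≤ I := by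
      intro C hC hle
      have hPC : P ⊔ C ∉ S := by
        intro hmem
        exact hC (le_sup_right.trans (hPmax.2 hmem le_sup_left))
      refine hPC ⟨hPS.1.trans le_sup_left, fun x hx => ?_⟩
      exact hle (mem_gcore.2 hx)
    have hXY : ∀ x ∈ gcore G (P ⊔ A'), ∀ y ∈ gcore G (P ⊔ B'), x * y ∈ I := by
      intro x hx y hy
      apply hPS.2
      intro g
      rw [smul_mul']
      obtain ⟨p, hp, a', ha', hpa⟩ := TwoSidedIdeal.mem_sup.1 (mem_gcore.1 hx g)
      obtain ⟨p', hp', b', hb', hqb⟩ := TwoSidedIdeal.mem_sup.1 (mem_gcore.1 hy g)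
      rw [← hpa, ← hqb]
      have h1 : p * (p' + b') ∈ P := P.mul_mem_right _ _ hp
      have h2 : a' * p' ∈ P := P.mul_mem_left _ _ hp'
      have h3 : a' * b' ∈ P := hAB a' ha' b' hb'
      have hexp : (p + a') * (p' + b') = p * (p' + b') + (a' * p' + a' * b') := by
        noncomm_ring
      rw [hexp]
      exact P.add_mem h1 (P.add_mem h2 h3)
    rcases hI.2.2 _ _ (gcore_stable _) (gcore_stable _) hXY with h | h
    · exact hnotS A' hA h
    · exact hnotS B' hB h
  exact part1 pt ρ haction P I hPprime
    (fun x => ⟨fun hx g => hIP (hI.2.1 g x hx), fun h => hPS.2 x h⟩)
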